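/- arXiv:1107.0147 — 5 statements merged into one kernel-verified Lean document; each statement's English description precedes it below -/
import Mathlib

section
/- Let q : ℝᵐ → ℝⁿ be an Ω-positive quadratic map with associated linear map φ, θ ∈ −Ω*, and let γ_{q,θ} be the Wishart law, i.e., the probability measure proportional to e^{⟨y,θ⟩} μ_q(dy). Then for every η ∈ −θ − Ω*, the Laplace transform ∫ e^{⟨y,η⟩} γ_{q,θ}(dy) equals det(I_m + φ(−θ)^{−1} φ(−η))^{−1/2}. -/
open MeasureTheory Matrix Real Set
open scoped NNReal ENNReal

/-- The Wishart law `γ_{q,θ}`: the exponential tilt of the measure `μ` by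
`e^{⟨y,θ⟩}`, normalized to a probability measure. -/
noncomputable def wishartLaw {n : ℕ} (μ : Measure (Fin n → ℝ)) (θ : Fin n → ℝ) :
    Measure (Fin n → ℝ) :=
  (∫⁻ y, ENNReal.ofReal (Real.exp (y ⬝ᵥ θ)) ∂μ)⁻¹ •
    μ.withDensity fun y => ENNReal.ofReal (Real.exp (y ⬝ᵥ θ))

lemma continuous_quadform {m : ℕ} (M : Matrix (Fin m) (Fin m) ℝ) :
    Continuous fun x : Fin m → ℝ => x ⬝ᵥ M.mulVec x := by
  simp only [dotProduct, mulVec]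
  exact continuous_finset_sum _ fun i _ => (continuous_apply i).mul
    (continuous_finset_sum _ fun j _ => continuous_const.mul (continuous_apply j))

lemma continuous_dotProduct_right {m : ℕ} (θ : Fin m → ℝ) :
    Continuous fun x : Fin m → ℝ => x ⬝ᵥ θ := by
  simp only [dotProduct]
  exact continuous_finset_sum _ fun i _ => (continuous_apply i).mul continuous_const

/-- The multivariate Gaussian integral with a positive definite matrix. -/
lemma gaussian_matrix {m : ℕ} {A : Matrix (Fin m) (Fin m) ℝ} (hA : A.PosDef) :
    Integrable (fun x : Fin m → ℝ => Real.exp (-(x ⬝ᵥ A.mulVec x))) ∧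
    ∫ x : Fin m → ℝ, Real.exp (-(x ⬝ᵥ A.mulVec x))
      = Real.sqrt π ^ m / Real.sqrt A.det := by
  classical
  open scoped MatrixOrder in
  set S := CFC.sqrt A with hS
  open scoped MatrixOrder in
  have hSS : S * S = A := CFC.sqrt_mul_sqrt_self A hA.posSemidef.nonneg
  have hsymm : Sᵀ = S := by
    open scoped MatrixOrder in
    have := (CFC.sqrt_nonneg A).posSemidef.1
    rwa [Matrix.IsHermitian, conjTranspose_eq_transpose_of_trivial] at this
  have hdet2 : S.det * S.det = A.det := by rw [← det_mul, hSS]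
  have hdet : S.det ≠ 0 := by
    intro h
    rw [h, mul_zero] at hdet2
    exact hA.det_pos.ne' hdet2.symm
  have habs : |S.det| = Real.sqrt A.det := by
    rw [← hdet2, ← sq, Real.sqrt_sq_eq_abs]
  -- pointwise identity
  have hpt : ∀ x : Fin m → ℝ,
      Real.exp (-(x ⬝ᵥ A.mulVec x)) = ∏ i, Real.exp (-(S.mulVec x i) ^ 2) := by
    intro x
    have h1 : x ⬝ᵥ A.mulVec x = (S.mulVec x) ⬝ᵥ (S.mulVec x) := by
      rw [← hSS, ← Matrix.mulVec_mulVec, Matrix.dotProduct_mulVec, ← Matrix.mulVec_transpose,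
        hsymm]
    rw [h1]
    rw [← Real.exp_sum]
    congr 1
    simp only [dotProduct, ← Finset.sum_neg_distrib]
    congr 1 with i
    ring
  -- the standard gaussian on the pi type
  have hg_int : Integrable (fun y : Fin m → ℝ => ∏ i, Real.exp (-(y i) ^ 2)) := by
    refine Integrable.fintype_prod (f := fun _ t => Real.exp (-t ^ 2)) fun i => ?_
    simpa using integrable_exp_neg_mul_sq (one_pos)
  have hg_val : ∫ y : Fin m → ℝ, ∏ i, Real.exp (-(y i) ^ 2) = Real.sqrt π ^ m := by
    rw [volume_pi, integral_fintype_prod_eq_pow (ι := Fin m) (fun t => Real.exp (-t ^ 2))]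
    have : ∫ t : ℝ, Real.exp (-t ^ 2) = Real.sqrt π := by
      simpa using integral_gaussian 1
    rw [this, Fintype.card_fin]
  have hg_cont : Continuous fun y : Fin m → ℝ => ∏ i, Real.exp (-(y i) ^ 2) :=
    continuous_finset_prod _ fun i _ =>
      (((continuous_apply i).pow 2).neg).rexp
  -- change of variables
  have hmap : Measure.map (Matrix.toLin' S) volume
      = ENNReal.ofReal |S.det⁻¹| • volume :=
    Real.map_matrix_volume_pi_eq_smul_volume_pi hdet
  have hTmeas : AEMeasurable (Matrix.toLin' S) (volume : Measure (Fin m → ℝ)) :=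
    (LinearMap.continuous_of_finiteDimensional _).measurable.aemeasurable
  have hcomp : (fun x : Fin m → ℝ => Real.exp (-(x ⬝ᵥ A.mulVec x)))
      = (fun y : Fin m → ℝ => ∏ i, Real.exp (-(y i) ^ 2)) ∘ (Matrix.toLin' S) := by
    funext x
    simp only [Function.comp_apply, Matrix.toLin'_apply]
    exact hpt x
  have habs' : |S.det⁻¹| = (Real.sqrt A.det)⁻¹ := by rw [abs_inv, habs]
  constructor
  · rw [hcomp, ← integrable_map_measure hg_cont.aestronglyMeasurable hTmeas]
    rw [hmap]
    exact hg_int.smul_measure ENNReal.ofReal_ne_top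
  · calc ∫ x : Fin m → ℝ, Real.exp (-(x ⬝ᵥ A.mulVec x))
        = ∫ y, (∏ i, Real.exp (-(y i) ^ 2)) ∂(Measure.map (Matrix.toLin' S) volume) := by
          rw [integral_map hTmeas hg_cont.aestronglyMeasurable]
          exact integral_congr_ae (ae_of_all _ fun x => by
            simpa [Matrix.toLin'_apply] using hpt x)
      _ = (ENNReal.ofReal |S.det⁻¹|).toReal * ∫ y : Fin m → ℝ, ∏ i, Real.exp (-(y i) ^ 2) := by
          rw [hmap, integral_smul_measure, smul_eq_mul]
      _ = Real.sqrt π ^ m / Real.sqrt A.det := by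
          rw [ENNReal.toReal_ofReal (abs_nonneg _), hg_val, habs', inv_mul_eq_div]

/-- The Laplace transform of the Wishart law `γ_{q,θ}` at
`η ∈ -θ - Ω*` equals `det(I_m + φ(-θ)⁻¹ φ(-η))^{-1/2}`. -/
theorem laplace_wishart {n m : ℕ} (Ω : Set (Fin n → ℝ))
    (hopen : IsOpen Ω) (hconv : Convex ℝ Ω)
    (hcone : ∀ (c : ℝ), 0 < c → ∀ y ∈ Ω, c • y ∈ Ω) (hne : Ω.Nonempty)
    (hreg : closure Ω ∩ (-closure Ω) = {0})
    (q : QuadraticMap ℝ (Fin m → ℝ) (Fin n → ℝ))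
    (hq : ∀ x, x ≠ 0 → q x ∈ closure Ω \ {0})
    (φ : (Fin n → ℝ) →ₗ[ℝ] Matrix (Fin m) (Fin m) ℝ)
    (hφsymm : ∀ η, (φ η).IsSymm)
    (hφ : ∀ (η : Fin n → ℝ) (x : Fin m → ℝ), x ⬝ᵥ (φ η).mulVec x = q x ⬝ᵥ η)
    (θ : Fin n → ℝ) (hθ : ∀ y ∈ closure Ω \ {0}, 0 < y ⬝ᵥ (-θ))
    (η : Fin n → ℝ) (hη : ∀ y ∈ closure Ω \ {0}, 0 < y ⬝ᵥ (-(η + θ))) :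
    ∫ y, Real.exp (y ⬝ᵥ η) ∂(wishartLaw (Measure.map (⇑q) volume) θ)
      = ((1 : Matrix (Fin m) (Fin m) ℝ) + (φ (-θ))⁻¹ * φ (-η)).det ^ (-(1 : ℝ) / 2) := by
  classical
  -- positive definiteness of φ(-ξ) for suitable ξ
  have posdef : ∀ ξ : Fin n → ℝ, (∀ y ∈ closure Ω \ {0}, 0 < y ⬝ᵥ (-ξ)) →
      (φ (-ξ)).PosDef := by
    intro ξ hξ
    refine posDef_iff_dotProduct_mulVec.mpr ⟨?_, ?_⟩
    · have := hφsymm (-ξ)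
      rwa [Matrix.IsHermitian, conjTranspose_eq_transpose_of_trivial]
    · intro x hx
      have hst : star x = x := by
        funext i; simp
      rw [hst, hφ (-ξ) x]
      exact hξ _ (hq x hx)
  have hA : (φ (-θ)).PosDef := posdef θ hθ
  have hB : (φ (-(θ + η))).PosDef := by
    refine posdef (θ + η) fun y hy => ?_
    have := hη y hy
    rwa [add_comm η θ] at this
  -- continuity and measurability of q
  have hqc : Continuous ⇑q := by
    have hqeq : ⇑q = fun x => fun j => x ⬝ᵥ (φ (Pi.single j 1)).mulVec x := by
      funext x j
      rw [hφ (Pi.single j 1) x, dotProduct_single, mul_one]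
    rw [hqeq]
    exact continuous_pi fun j => continuous_quadform _
  have hqm : AEMeasurable ⇑q (volume : Measure (Fin m → ℝ)) :=
    hqc.measurable.aemeasurable
  -- Laplace transform of μ at suitable ξ
  have key : ∀ ξ : Fin n → ℝ, (φ (-ξ)).PosDef →
      Integrable (fun y => Real.exp (y ⬝ᵥ ξ)) (Measure.map (⇑q) volume) ∧
      ∫ y, Real.exp (y ⬝ᵥ ξ) ∂(Measure.map (⇑q) volume) = Real.sqrt π ^ m / Real.sqrt (φ (-ξ)).det := by
    intro ξ hξ
    have hcont : Continuous fun y : Fin n → ℝ => Real.exp (y ⬝ᵥ ξ) :=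
      (continuous_dotProduct_right ξ).rexp
    have hcompξ : (fun x : Fin m → ℝ => Real.exp (q x ⬝ᵥ ξ))
        = fun x : Fin m → ℝ => Real.exp (-(x ⬝ᵥ (φ (-ξ)).mulVec x)) := by
      funext x
      rw [hφ (-ξ) x, dotProduct_neg, neg_neg]
    constructor
    · rw [integrable_map_measure hcont.aestronglyMeasurable hqm]
      have : ((fun y => Real.exp (y ⬝ᵥ ξ)) ∘ ⇑q)
          = fun x : Fin m → ℝ => Real.exp (-(x ⬝ᵥ (φ (-ξ)).mulVec x)) := by
        funext x
        simp only [Function.comp_apply]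
        rw [hφ (-ξ) x, dotProduct_neg, neg_neg]
      rw [this]
      exact (gaussian_matrix hξ).1
    · rw [integral_map hqm hcont.aestronglyMeasurable]
      calc ∫ x : Fin m → ℝ, Real.exp (q x ⬝ᵥ ξ)
          = ∫ x : Fin m → ℝ, Real.exp (-(x ⬝ᵥ (φ (-ξ)).mulVec x)) := by rw [hcompξ]
        _ = Real.sqrt π ^ m / Real.sqrt (φ (-ξ)).det := (gaussian_matrix hξ).2
  -- compute the normalizing constant
  have hconst : (∫⁻ y, ENNReal.ofReal (Real.exp (y ⬝ᵥ θ)) ∂(Measure.map (⇑q) volume))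
      = ENNReal.ofReal (Real.sqrt π ^ m / Real.sqrt (φ (-θ)).det) := by
    rw [← ofReal_integral_eq_lintegral_ofReal (key θ hA).1
      (ae_of_all _ fun y => (Real.exp_pos _).le), (key θ hA).2]
  -- compute the integral against the tilted measure
  have htilt : ∫ y, Real.exp (y ⬝ᵥ η)
      ∂((Measure.map (⇑q) volume).withDensity fun y => ENNReal.ofReal (Real.exp (y ⬝ᵥ θ)))
      = Real.sqrt π ^ m / Real.sqrt (φ (-(θ + η))).det := by
    have hmeas : Measurable fun y : Fin n → ℝ => Real.toNNReal (Real.exp (y ⬝ᵥ θ)) :=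
      ((continuous_dotProduct_right θ).rexp).measurable.real_toNNReal
    have hwd : ((Measure.map (⇑q) volume).withDensity
          fun y => ENNReal.ofReal (Real.exp (y ⬝ᵥ θ)))
        = (Measure.map (⇑q) volume).withDensity
          fun y => ((Real.toNNReal (Real.exp (y ⬝ᵥ θ)) : ℝ≥0) : ℝ≥0∞) := rfl
    rw [hwd, integral_withDensity_eq_integral_smul hmeas]
    have : (fun y : Fin n → ℝ => Real.toNNReal (Real.exp (y ⬝ᵥ θ)) • Real.exp (y ⬝ᵥ η))
        = fun y => Real.exp (y ⬝ᵥ (θ + η)) := by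
      funext y
      rw [NNReal.smul_def, smul_eq_mul, Real.coe_toNNReal _ (Real.exp_pos _).le,
        ← Real.exp_add, dotProduct_add]
    rw [this, (key (θ + η) hB).2]
  -- put the pieces together
  have haPos : 0 < (φ (-θ)).det := hA.det_pos
  have hbPos : 0 < (φ (-(θ + η))).det := hB.det_pos
  have hπ : (0 : ℝ) < Real.sqrt π ^ m := by positivity
  rw [wishartLaw, integral_smul_measure, htilt, hconst, ENNReal.toReal_inv,
    ENNReal.toReal_ofReal (by positivity), smul_eq_mul]
  -- the determinant identity
  have hBsum : φ (-(θ + η)) = φ (-θ) + φ (-η) := by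
    rw [neg_add, map_add]
  have hmatrix : (1 : Matrix (Fin m) (Fin m) ℝ) + (φ (-θ))⁻¹ * φ (-η)
      = (φ (-θ))⁻¹ * φ (-(θ + η)) := by
    rw [hBsum, Matrix.mul_add, Matrix.nonsing_inv_mul _ hA.det_pos.ne'.isUnit]
  rw [hmatrix, det_mul, Matrix.det_nonsing_inv, Ring.inverse_eq_inv']
  set a := (φ (-θ)).det
  set b := (φ (-(θ + η))).det
  have h1 : (a⁻¹ * b) ^ (-(1 : ℝ) / 2) = Real.sqrt a / Real.sqrt b := by
    rw [neg_div, Real.rpow_neg (by positivity), ← Real.sqrt_eq_rpow,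
      inv_mul_eq_div, Real.sqrt_div hbPos.le, inv_div]
  rw [h1]
  have hsa : (0 : ℝ) < Real.sqrt a := Real.sqrt_pos.mpr haPos
  have hsb : (0 : ℝ) < Real.sqrt b := Real.sqrt_pos.mpr hbPos
  field_simp
end

section
/- Let q₁ : ℝ^{m₁} → ℝⁿ and q₂ : ℝ^{m₂} → ℝⁿ be Ω-positive quadratic maps and q = q₁ ⊕ q₂ their direct sum, defined by q(x₁,x₂) = q₁(x₁) + q₂(x₂). Then q is Ω-positive, and the Riesz measure μ_q (pushforward of Lebesgue measure on ℝ^{m₁+m₂} by q) equals the convolution μ_{q₁} * μ_{q₂}. Consequently L_{μ_q}(θ) = L_{μ_{q₁}}(θ) · L_{μ_{q₂}}(θ) for θ ∈ −Ω*, and γ_{q,θ} = γ_{q₁,θ} * γ_{q₂,θ}. -/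
open MeasureTheory Matrix Real Set
open scoped ENNReal

/-- Any quadratic map between finite-dimensional real spaces is continuous. -/
theorem my_quadratic_continuous {m n : ℕ} (Q : QuadraticMap ℝ (Fin m → ℝ) (Fin n → ℝ)) :
    Continuous Q := by
  have h : ∀ x, Q x = (QuadraticMap.associatedHom ℝ Q) x x := by
    intro x
    conv_lhs => rw [← QuadraticMap.toQuadraticMap_associated ℝ Q]
    rfl
  set B := QuadraticMap.associatedHom ℝ Q with hB
  let L : (Fin m → ℝ) →ₗ[ℝ] ((Fin m → ℝ) →L[ℝ] (Fin n → ℝ)) :=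
    { toFun := fun x => LinearMap.toContinuousLinearMap (B x)
      map_add' := fun x y => by ext z; simp
      map_smul' := fun c x => by ext z; simp }
  have hL : Continuous L := L.continuous_of_finiteDimensional
  have hcont : Continuous fun x => (L x) x :=
    isBoundedBilinearMap_apply.continuous.comp (hL.prodMk continuous_id)
  convert hcont using 1
  funext x
  rw [h x]
  rfl

theorem my_smul_prod_smul {α β : Type*} [MeasurableSpace α] [MeasurableSpace β]
    (μ : Measure α) (ν : Measure β) [SFinite μ] [SFinite ν] (c d : ℝ≥0∞) :
    (c • μ).prod (d • ν) = (c * d) • (μ.prod ν) := by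
  ext s hs
  rw [Measure.prod_apply hs, Measure.smul_apply, Measure.prod_apply hs,
    lintegral_smul_measure]
  simp_rw [Measure.smul_apply, smul_eq_mul]
  rw [lintegral_const_mul _ (measurable_measure_prodMk_left hs)]
  ring

theorem my_map_withDensity {α β : Type*} [MeasurableSpace α] [MeasurableSpace β] (μ : Measure α)
    {f : α → β} {g : β → ℝ≥0∞} (hf : Measurable f) (hg : Measurable g) :
    (μ.map f).withDensity g = Measure.map f (μ.withDensity (g ∘ f)) := by
  ext s hs
  rw [withDensity_apply _ hs, Measure.map_apply hf hs,
    withDensity_apply _ (hf hs), setLIntegral_map hs hg hf]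
  rfl

theorem my_prod_withDensity {α β : Type*} [MeasurableSpace α] [MeasurableSpace β]
    (μ : Measure α) (ν : Measure β)
    [SFinite μ] [SFinite ν] {f : α → ℝ≥0∞} {g : β → ℝ≥0∞} (hf : Measurable f)
    (hg : Measurable g) :
    (μ.withDensity f).prod (ν.withDensity g)
      = (μ.prod ν).withDensity (fun p => f p.1 * g p.2) := by
  ext s hs
  have hmeas : Measurable fun x => (ν.withDensity g) (Prod.mk x ⁻¹' s) :=
    measurable_measure_prodMk_left hs
  have hm : Measurable fun p : α × β => f p.1 * g p.2 :=
    (hf.comp measurable_fst).mul (hg.comp measurable_snd)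
  rw [Measure.prod_apply hs, withDensity_apply _ hs,
    lintegral_withDensity_eq_lintegral_mul _ hf hmeas,
    ← lintegral_indicator hs, lintegral_prod _ (hm.indicator hs).aemeasurable]
  congr 1
  funext x
  rw [Pi.mul_apply, withDensity_apply _ (measurable_prodMk_left hs), ← lintegral_indicator
    (measurable_prodMk_left hs), ← lintegral_const_mul _ (hg.indicator (measurable_prodMk_left hs))]
  congr 1
  funext y
  by_cases hy : (x, y) ∈ s <;>
    simp [Set.indicator, hy, Set.mem_preimage]

/-- The direct sum `q = q₁ ⊕ q₂` of two `Ω`-positive quadratic maps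
is `Ω`-positive; its Riesz measure is the convolution `μ_{q₁} * μ_{q₂}`; the
Laplace transforms multiply; and `γ_{q,θ} = γ_{q₁,θ} * γ_{q₂,θ}`. -/
theorem direct_sum_riesz_conv {n m₁ m₂ : ℕ} (Ω : Set (Fin n → ℝ))
    (hopen : IsOpen Ω) (hconv : Convex ℝ Ω)
    (hcone : ∀ (c : ℝ), 0 < c → ∀ y ∈ Ω, c • y ∈ Ω) (hne : Ω.Nonempty)
    (hreg : closure Ω ∩ (-closure Ω) = {0})
    (q₁ : QuadraticMap ℝ (Fin m₁ → ℝ) (Fin n → ℝ))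
    (q₂ : QuadraticMap ℝ (Fin m₂ → ℝ) (Fin n → ℝ))
    (hq₁ : ∀ x, x ≠ 0 → q₁ x ∈ closure Ω \ {0})
    (hq₂ : ∀ x, x ≠ 0 → q₂ x ∈ closure Ω \ {0})
    (q : (Fin m₁ → ℝ) × (Fin m₂ → ℝ) → (Fin n → ℝ))
    (hq : ∀ x, q x = q₁ x.1 + q₂ x.2) :
    (∀ x, x ≠ 0 → q x ∈ closure Ω \ {0}) ∧
    (Measure.map q volume
      = Measure.map (fun p : (Fin n → ℝ) × (Fin n → ℝ) => p.1 + p.2)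
          ((Measure.map (⇑q₁) volume).prod (Measure.map (⇑q₂) volume))) ∧
    (∀ θ : Fin n → ℝ, (∀ y ∈ closure Ω \ {0}, 0 < y ⬝ᵥ (-θ)) →
      (∫ y, Real.exp (y ⬝ᵥ θ) ∂(Measure.map q volume))
        = (∫ y, Real.exp (y ⬝ᵥ θ) ∂(Measure.map (⇑q₁) volume)) *
          (∫ y, Real.exp (y ⬝ᵥ θ) ∂(Measure.map (⇑q₂) volume))) ∧
    (∀ θ : Fin n → ℝ, (∀ y ∈ closure Ω \ {0}, 0 < y ⬝ᵥ (-θ)) →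
      wishartLaw (Measure.map q volume) θ
        = Measure.map (fun p : (Fin n → ℝ) × (Fin n → ℝ) => p.1 + p.2)
            ((wishartLaw (Measure.map (⇑q₁) volume) θ).prod
              (wishartLaw (Measure.map (⇑q₂) volume) θ))) := by
  -- basic measurability
  have hm1 : Measurable ⇑q₁ := (my_quadratic_continuous q₁).measurable
  have hm2 : Measurable ⇑q₂ := (my_quadratic_continuous q₂).measurable
  have haddm : Measurable fun p : (Fin n → ℝ) × (Fin n → ℝ) => p.1 + p.2 :=
    measurable_fst.add measurable_snd
  have hqeq : q = (fun p : (Fin n → ℝ) × (Fin n → ℝ) => p.1 + p.2) ∘ Prod.map ⇑q₁ ⇑q₂ :=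
    funext fun x => by simp [hq x, Prod.map]
  have hpm : Measurable (Prod.map ⇑q₁ ⇑q₂) := hm1.prodMap hm2
  have hw : ∀ θ : Fin n → ℝ,
      Measurable fun y : Fin n → ℝ => ENNReal.ofReal (Real.exp (y ⬝ᵥ θ)) := by
    intro θ
    have hd : Continuous fun y : Fin n → ℝ => y ⬝ᵥ θ := by
      simp only [dotProduct]
      exact continuous_finset_sum _ fun i _ => (continuous_apply i).mul continuous_const
    exact ENNReal.measurable_ofReal.comp (Real.continuous_exp.comp hd).measurable
  -- closure of Ω is a cone
  have hcl : ∀ c : ℝ, 0 < c → ∀ y ∈ closure Ω, c • y ∈ closure Ω := by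
    intro c hc y hy
    have h1 := image_closure_subset_closure_image
      (f := fun z : Fin n → ℝ => c • z) (s := Ω) (continuous_const_smul c)
    have h2 : c • y ∈ (fun z : Fin n → ℝ => c • z) '' closure Ω := ⟨y, hy, rfl⟩
    refine closure_mono ?_ (h1 h2)
    rintro _ ⟨z, hz, rfl⟩
    exact hcone c hc z hz
  -- Part 1
  have part1 : ∀ x : (Fin m₁ → ℝ) × (Fin m₂ → ℝ), x ≠ 0 → q x ∈ closure Ω \ {0} := by
    intro x hx
    rw [hq]
    by_cases h1 : x.1 = 0
    · have h2 : x.2 ≠ 0 := fun h => hx (Prod.ext h1 h)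
      rw [h1]
      simpa using hq₂ x.2 h2
    by_cases h2 : x.2 = 0
    · rw [h2]
      simpa using hq₁ x.1 h1
    obtain ⟨ha, ha0⟩ := hq₁ x.1 h1
    obtain ⟨hb, hb0⟩ := hq₂ x.2 h2
    constructor
    · have hmid : (1/2 : ℝ) • q₁ x.1 + (1/2 : ℝ) • q₂ x.2 ∈ closure Ω :=
        hconv.closure ha hb (by norm_num) (by norm_num) (by norm_num)
      have h2s := hcl 2 two_pos _ hmid
      have : (2:ℝ) • ((1/2 : ℝ) • q₁ x.1 + (1/2 : ℝ) • q₂ x.2) = q₁ x.1 + q₂ x.2 := by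
        rw [smul_add, smul_smul, smul_smul]
        norm_num
      rwa [this] at h2s
    · intro h0
      rw [Set.mem_singleton_iff] at h0
      have hab : q₁ x.1 = -(q₂ x.2) := by
        rw [eq_neg_iff_add_eq_zero]
        exact h0
      have hmem : q₁ x.1 ∈ closure Ω ∩ (-closure Ω) := by
        refine ⟨ha, ?_⟩
        rw [Set.mem_neg, hab, neg_neg]
        exact hb
      rw [hreg] at hmem
      exact ha0 hmem
  -- Part 2
  have part2 : Measure.map q volume
      = Measure.map (fun p : (Fin n → ℝ) × (Fin n → ℝ) => p.1 + p.2)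
          ((Measure.map (⇑q₁) volume).prod (Measure.map (⇑q₂) volume)) := by
    calc Measure.map q volume
        = Measure.map ((fun p : (Fin n → ℝ) × (Fin n → ℝ) => p.1 + p.2) ∘ Prod.map ⇑q₁ ⇑q₂)
            volume := by rw [hqeq]
      _ = Measure.map (fun p : (Fin n → ℝ) × (Fin n → ℝ) => p.1 + p.2)
            (Measure.map (Prod.map ⇑q₁ ⇑q₂) volume) := (Measure.map_map haddm hpm).symm
      _ = Measure.map (fun p : (Fin n → ℝ) × (Fin n → ℝ) => p.1 + p.2)
            (Measure.map (Prod.map ⇑q₁ ⇑q₂)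
              ((volume : Measure (Fin m₁ → ℝ)).prod volume)) := by
            rw [← Measure.volume_eq_prod]
      _ = Measure.map (fun p : (Fin n → ℝ) × (Fin n → ℝ) => p.1 + p.2)
            ((Measure.map (⇑q₁) volume).prod (Measure.map (⇑q₂) volume)) := by
            rw [Measure.map_prod_map _ _ hm1 hm2]
  -- Key lintegral computation
  have key : ∀ θ : Fin n → ℝ,
      (∫⁻ y, ENNReal.ofReal (Real.exp (y ⬝ᵥ θ)) ∂(Measure.map q volume))
        = (∫⁻ y, ENNReal.ofReal (Real.exp (y ⬝ᵥ θ)) ∂(Measure.map (⇑q₁) volume)) *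
          (∫⁻ y, ENNReal.ofReal (Real.exp (y ⬝ᵥ θ)) ∂(Measure.map (⇑q₂) volume)) := by
    intro θ
    rw [part2, lintegral_map (hw θ) haddm]
    have heq : ∀ p : (Fin n → ℝ) × (Fin n → ℝ),
        ENNReal.ofReal (Real.exp ((p.1 + p.2) ⬝ᵥ θ))
          = ENNReal.ofReal (Real.exp (p.1 ⬝ᵥ θ)) * ENNReal.ofReal (Real.exp (p.2 ⬝ᵥ θ)) := by
      intro p
      rw [add_dotProduct, Real.exp_add, ENNReal.ofReal_mul (Real.exp_nonneg _)]
    simp_rw [heq]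
    exact lintegral_prod_mul (hw θ).aemeasurable (hw θ).aemeasurable
  -- positivity of the factor Laplace transforms
  have hLpos : ∀ (m : ℕ) (Q : QuadraticMap ℝ (Fin m → ℝ) (Fin n → ℝ)) (θ : Fin n → ℝ),
      (∫⁻ y, ENNReal.ofReal (Real.exp (y ⬝ᵥ θ)) ∂(Measure.map (⇑Q) volume)) ≠ 0 := by
    intro m Q θ
    have hmQ : Measurable ⇑Q := (my_quadratic_continuous Q).measurable
    rw [lintegral_map (hw θ) hmQ]
    have hmeas : Measurable fun x : Fin m → ℝ => ENNReal.ofReal (Real.exp (Q x ⬝ᵥ θ)) :=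
      (hw θ).comp hmQ
    refine ne_of_gt ?_
    rw [lintegral_pos_iff_support hmeas]
    have hsupp : (Function.support fun x : Fin m → ℝ => ENNReal.ofReal (Real.exp (Q x ⬝ᵥ θ)))
        = Set.univ := by
      ext x
      simp [Function.mem_support, ENNReal.ofReal_eq_zero, not_le, Real.exp_pos]
    rw [hsupp]
    exact Measure.measure_univ_pos.mpr (NeZero.ne _)
  refine ⟨part1, part2, ?_, ?_⟩
  -- Part 3
  · intro θ _
    have hnn : ∀ μ : Measure (Fin n → ℝ),
        (∫ y, Real.exp (y ⬝ᵥ θ) ∂μ)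
          = (∫⁻ y, ENNReal.ofReal (Real.exp (y ⬝ᵥ θ)) ∂μ).toReal := by
      intro μ
      refine integral_eq_lintegral_of_nonneg_ae (ae_of_all _ fun y => (Real.exp_pos _).le) ?_
      have hd : Continuous fun y : Fin n → ℝ => Real.exp (y ⬝ᵥ θ) := by
        refine Real.continuous_exp.comp ?_
        simp only [dotProduct]
        exact continuous_finset_sum _ fun i _ => (continuous_apply i).mul continuous_const
      exact hd.aestronglyMeasurable
    rw [hnn, hnn, hnn, key θ, ENNReal.toReal_mul]
  -- Part 4
  · intro θ _
    set w := fun y : Fin n → ℝ => ENNReal.ofReal (Real.exp (y ⬝ᵥ θ)) with hwdef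
    have hwm : Measurable w := hw θ
    set μ₁ := Measure.map (⇑q₁) volume with hμ₁
    set μ₂ := Measure.map (⇑q₂) volume with hμ₂
    set L₁ := ∫⁻ y, w y ∂μ₁ with hL₁
    set L₂ := ∫⁻ y, w y ∂μ₂ with hL₂
    have hL₁0 : L₁ ≠ 0 := hLpos m₁ q₁ θ
    have hL₂0 : L₂ ≠ 0 := hLpos m₂ q₂ θ
    have hwd : (Measure.map q volume).withDensity w
        = Measure.map (fun p : (Fin n → ℝ) × (Fin n → ℝ) => p.1 + p.2)
            ((μ₁.withDensity w).prod (μ₂.withDensity w)) := by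
      rw [part2, my_map_withDensity _ haddm hwm]
      congr 1
      rw [my_prod_withDensity _ _ hwm hwm]
      congr 1
      funext p
      simp only [Function.comp_apply, hwdef]
      rw [add_dotProduct, Real.exp_add, ENNReal.ofReal_mul (Real.exp_nonneg _)]
    show (∫⁻ y, w y ∂(Measure.map q volume))⁻¹ • (Measure.map q volume).withDensity w
        = Measure.map (fun p : (Fin n → ℝ) × (Fin n → ℝ) => p.1 + p.2)
            ((L₁⁻¹ • μ₁.withDensity w).prod (L₂⁻¹ • μ₂.withDensity w))
    rw [my_smul_prod_smul, Measure.map_smul, ← hwd]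
    have hLtot : (∫⁻ y, w y ∂(Measure.map q volume)) = L₁ * L₂ := key θ
    rw [hLtot, ENNReal.mul_inv (Or.inl hL₁0) (Or.inr hL₂0)]
end

section
/- Consider the quadratic map q̃ : ℂ² → Herm(2,ℂ), q̃(z) = z z̄ᵀ, with Ω ⊂ Herm(2,ℂ) the cone of positive definite Hermitian 2×2 matrices. Identifying ℂ² with ℝ⁴ and Herm(2,ℂ) with ℝ⁴ via the entries (y₁,y₂,y₃,y₄) of [[y₁, y₃+iy₄],[y₃−iy₄, y₂]], the associated linear map φ_q of the corresponding real quadratic map q : ℝ⁴ → ℝ⁴ satisfies det φ_q(η) = (η₁η₂ − η₃² − η₄²)² for all η, and for η in the dual cone the Laplace transform of the Riesz measure μ_q at −η equals π²(η₁η₂ − η₃² − η₄²)^{−1}. -/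
open MeasureTheory Matrix Real Set

/-- For the quadratic map `q̃(z) = z z̄ᵀ` on `ℂ² → Herm(2,ℂ)`,
written in real coordinates (`Herm(2,ℂ) ∋ [[y₁, y₃+iy₄],[y₃-iy₄, y₂]] ↔
(y₁,y₂,y₃,y₄)`, with pairing `⟨y,η⟩ = y₁η₁ + y₂η₂ + 2y₃η₃ + 2y₄η₄`), the
associated linear map `φ_q` satisfies `det φ_q(η) = (η₁η₂ - η₃² - η₄²)²`, and
for `η` in the dual cone the Laplace transform of the Riesz measure at `-η`
equals `π² (η₁η₂ - η₃² - η₄²)⁻¹`. -/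
theorem lorentz_hermitian_riesz :
    let q : (Fin 4 → ℝ) → (Fin 4 → ℝ) := fun x =>
      ![(x 0)^2 + (x 1)^2, (x 2)^2 + (x 3)^2,
        x 0 * x 2 + x 1 * x 3, x 0 * x 3 - x 1 * x 2]
    let pair : (Fin 4 → ℝ) → (Fin 4 → ℝ) → ℝ := fun y η =>
      y 0 * η 0 + y 1 * η 1 + 2 * y 2 * η 2 + 2 * y 3 * η 3
    let Ω : Set (Fin 4 → ℝ) :=
      {y | 0 < y 0 ∧ 0 < y 0 * y 1 - (y 2)^2 - (y 3)^2}
    let φ : (Fin 4 → ℝ) → Matrix (Fin 4) (Fin 4) ℝ := fun η =>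
      !![η 0, 0, η 2, η 3;
         0, η 0, -η 3, η 2;
         η 2, -η 3, η 1, 0;
         η 3, η 2, 0, η 1]
    (∀ (η : Fin 4 → ℝ) (x : Fin 4 → ℝ), x ⬝ᵥ (φ η).mulVec x = pair (q x) η) ∧
    (∀ η : Fin 4 → ℝ, (φ η).det = (η 0 * η 1 - (η 2)^2 - (η 3)^2) ^ 2) ∧
    (∀ η : Fin 4 → ℝ, (∀ y ∈ closure Ω \ {0}, 0 < pair y η) →
      ∫ y, Real.exp (-(pair y η)) ∂(Measure.map q volume)
        = Real.pi ^ 2 * (η 0 * η 1 - (η 2)^2 - (η 3)^2)⁻¹) := by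
  intro q pair Ω φ
  refine ⟨?_, ?_, ?_⟩
  · intro η x
    simp only [q, pair, φ, Matrix.mulVec, dotProduct, Fin.sum_univ_four]
    simp
    ring
  · intro η
    simp only [φ]
    simp [Matrix.det_succ_row_zero, Fin.sum_univ_succ, Fin.succAbove, Fin.castSucc,
      Fin.castAdd, Fin.castLE]
    ring
  · intro η hη
    -- `q x` always lies in the closure of `Ω`
    have hc : ∀ c : ℝ, Filter.Tendsto (fun n : ℕ => c / (n+1:ℝ)) Filter.atTop (nhds 0) := by
      intro c
      simpa [mul_one_div, div_eq_mul_inv] using tendsto_one_div_add_atTop_nhds_zero_nat.const_mul c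
    have key : ∀ y : Fin 4 → ℝ, 0 ≤ y 0 → 0 ≤ y 1 →
        0 ≤ y 0 * y 1 - (y 2)^2 - (y 3)^2 → y ∈ closure Ω := by
      intro y h0 h1 h2
      have htt : Filter.Tendsto (fun n : ℕ => fun i : Fin 4 =>
          y i + (if (i:ℕ) < 2 then (1:ℝ) else 0) / (n+1:ℝ)) Filter.atTop (nhds y) := by
        rw [tendsto_pi_nhds]
        intro i
        simpa using tendsto_const_nhds.add (hc (if (i:ℕ) < 2 then (1:ℝ) else 0))
      refine mem_closure_of_tendsto htt (Filter.Eventually.of_forall fun n => ?_)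
      have hu : 0 < ((n:ℝ)+1)⁻¹ := by positivity
      constructor
      · show 0 < y 0 + (if ((0 : Fin 4):ℕ) < 2 then (1:ℝ) else 0) / (n+1:ℝ)
        norm_num
        nlinarith
      · show 0 < (y 0 + (if ((0 : Fin 4):ℕ) < 2 then (1:ℝ) else 0) / (n+1:ℝ))
            * (y 1 + (if ((1 : Fin 4):ℕ) < 2 then (1:ℝ) else 0) / (n+1:ℝ))
            - (y 2 + (if ((2 : Fin 4):ℕ) < 2 then (1:ℝ) else 0) / (n+1:ℝ))^2
            - (y 3 + (if ((3 : Fin 4):ℕ) < 2 then (1:ℝ) else 0) / (n+1:ℝ))^2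
        simp only [show ((0 : Fin 4):ℕ) = 0 from rfl, show ((1 : Fin 4):ℕ) = 1 from rfl,
          show ((2 : Fin 4):ℕ) = 2 from rfl, show ((3 : Fin 4):ℕ) = 3 from rfl]
        norm_num [div_eq_mul_inv]
        nlinarith
    have hq_mem : ∀ x : Fin 4 → ℝ, q x ∈ closure Ω := by
      intro x
      refine key _ ?_ ?_ ?_
      · simp [q]; positivity
      · simp [q]; positivity
      · simp only [q]
        simp
        nlinarith [sq_nonneg (x 0 * x 2 + x 1 * x 3), sq_nonneg (x 0 * x 3 - x 1 * x 2)]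
    have hQ : ∀ x : Fin 4 → ℝ, x ≠ 0 → 0 < pair (q x) η := by
      intro x hx
      refine hη (q x) ⟨hq_mem x, ?_⟩
      simp only [mem_singleton_iff]
      intro h
      apply hx
      have h0 := congrFun h 0
      have h1 := congrFun h 1
      simp [q] at h0 h1
      funext i
      fin_cases i <;> simp <;> nlinarith
    have hη0 : 0 < η 0 := by
      have := hQ ![1,0,0,0] (by intro h; have := congrFun h 0; simp at this)
      simpa [q, pair] using this
    have hη1 : 0 < η 1 := by
      have := hQ ![0,0,1,0] (by intro h; have := congrFun h 2; simp at this)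
      simpa [q, pair] using this
    set D : ℝ := η 0 * η 1 - (η 2)^2 - (η 3)^2 with hDdef
    have hD : 0 < D := by
      have hx : (![η 1, 0, -η 2, -η 3] : Fin 4 → ℝ) ≠ 0 := by
        intro h; have := congrFun h 0; simp at this; linarith
      have h3 := hQ ![η 1, 0, -η 2, -η 3] hx
      simp [q, pair] at h3
      nlinarith
    have hη0' : η 0 ≠ 0 := ne_of_gt hη0
    set c : ℝ := D / η 0 with hcdef
    have hcpos : 0 < c := div_pos hD hη0
    set b : Fin 4 → ℝ := ![η 0, η 0, c, c] with hbdef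
    set A : Matrix (Fin 4) (Fin 4) ℝ :=
      !![1, 0, η 2 / η 0, η 3 / η 0; 0, 1, -(η 3 / η 0), η 2 / η 0;
         (0:ℝ),0,1,0; 0,0,0,1] with hAdef
    have hdet : A.det = 1 := by
      simp [hAdef, Matrix.det_succ_row_zero, Fin.sum_univ_succ, Fin.succAbove, Fin.castSucc,
        Fin.castAdd, Fin.castLE]
    have hdet' : A.det ≠ 0 := by rw [hdet]; norm_num
    set g : (Fin 4 → ℝ) → ℝ := fun y => ∏ i, Real.exp (-(b i) * (y i)^2) with hgdef
    have hgc : Continuous g := by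
      refine continuous_finset_prod _ fun i _ => ?_
      fun_prop
    have hqc : Continuous q := by
      apply continuous_pi
      intro i
      fin_cases i <;> simp [q] <;> fun_prop
    have hpc : Continuous fun y : Fin 4 → ℝ => Real.exp (-(pair y η)) := by
      simp only [pair]; fun_prop
    have hkey : ∀ x : Fin 4 → ℝ, Real.exp (-(pair (q x) η)) = g (A.mulVec x) := by
      intro x
      rw [hgdef]
      simp only [← Real.exp_sum, neg_mul]
      congr 1
      simp only [pair, q, hbdef, hAdef, hcdef, hDdef]
      simp [Fin.sum_univ_four, Matrix.mulVec, dotProduct, Matrix.vecHead,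
        Matrix.vecTail, Function.comp]
      field_simp
      ring
    have hmap : Measure.map (Matrix.toLin' A) volume = volume := by
      rw [Real.map_matrix_volume_pi_eq_smul_volume_pi hdet', hdet]
      norm_num
    have hT : Continuous (Matrix.toLin' A) := LinearMap.continuous_on_pi _
    rw [integral_map hqc.measurable.aemeasurable hpc.aestronglyMeasurable]
    calc ∫ x, Real.exp (-(pair (q x) η))
        = ∫ x, g (A.mulVec x) := by simp_rw [hkey]
      _ = ∫ y, g y ∂(Measure.map (Matrix.toLin' A) volume) := by
          rw [integral_map hT.measurable.aemeasurable hgc.aestronglyMeasurable]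
          simp [Matrix.toLin'_apply]
      _ = ∫ y, g y := by rw [hmap]
      _ = ∏ i, ∫ v : ℝ, Real.exp (-(b i) * v^2) :=
          MeasureTheory.integral_fintype_prod_eq_prod (ι := Fin 4)
            (fun i (v : ℝ) => Real.exp (-(b i) * v^2))
      _ = Real.pi ^ 2 * D⁻¹ := by
          rw [Fin.prod_univ_four]
          have e0 : b 0 = η 0 := rfl
          have e1 : b 1 = η 0 := rfl
          have e2 : b 2 = c := rfl
          have e3 : b 3 = c := rfl
          rw [e0, e1, e2, e3, integral_gaussian, integral_gaussian]
          rw [show √(π/η 0) * √(π/η 0) * √(π/c) * √(π/c)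
              = (√(π/η 0) * √(π/η 0)) * (√(π/c) * √(π/c)) from by ring,
            Real.mul_self_sqrt (by positivity), Real.mul_self_sqrt (by positivity), hcdef]
          field_simp
end

section
/- Let X be an ℝᵐ-valued Gaussian random vector with law N(0, Σ) where Σ = φ(−θ)^{−1}, for an Ω-positive quadratic map q : ℝᵐ → ℝⁿ with associated linear map φ and θ ∈ −Ω*. Then the law of Y := q(X)/2 is the Wishart law γ_{q,θ}, i.e., for every bounded measurable f, E[f(q(X)/2)] = ∫ f(y) γ_{q,θ}(dy). -/
open MeasureTheory Matrix Real Set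

lemma aux_map_withDensity {α β : Type*} [MeasurableSpace α] [MeasurableSpace β]
    (μ : Measure α) {T : α → β} (hT : Measurable T) {g : β → ENNReal} (hg : Measurable g) :
    Measure.map T (μ.withDensity fun x => g (T x)) = (Measure.map T μ).withDensity g := by
  ext s hs
  rw [Measure.map_apply hT hs, withDensity_apply _ (hT hs), withDensity_apply _ hs,
    setLIntegral_map hs hg hT]

lemma aux_quad_eq_sum_sq {m : ℕ} {A B : Matrix (Fin m) (Fin m) ℝ} (hB : B.IsHermitian)
    (hBB : B * B = A) (x : Fin m → ℝ) :
    x ⬝ᵥ A.mulVec x = ∑ i, (B.mulVec x i) ^ 2 := by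
  have hBt : Bᵀ = B := by
    rw [← Matrix.conjTranspose_eq_transpose_of_trivial]; exact hB
  have hv : x ᵥ* B = B.mulVec x := by rw [← hBt, Matrix.vecMul_transpose, hBt]
  rw [← hBB, ← Matrix.mulVec_mulVec, Matrix.dotProduct_mulVec, hv]
  simp [dotProduct, sq]

lemma aux_gauss_1d : Integrable (fun t : ℝ => exp (-t ^ 2)) := by
  simpa using integrable_exp_neg_mul_sq (one_pos)

lemma aux_gauss_pi_integrable {m : ℕ} :
    Integrable (fun y : Fin m → ℝ => exp (-∑ i, y i ^ 2)) := by
  have : (fun y : Fin m → ℝ => exp (-∑ i, y i ^ 2))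
      = fun y => ∏ i, exp (-(y i ^ 2)) := by
    funext y
    rw [← Real.exp_sum, ← Finset.sum_neg_distrib]
  rw [this]
  exact Integrable.fintype_prod (f := fun (_ : Fin m) (t : ℝ) => exp (-t ^ 2)) fun _ => aux_gauss_1d

lemma aux_gauss_pi_integral {m : ℕ} :
    ∫ y : Fin m → ℝ, exp (-∑ i, y i ^ 2) = π ^ ((m : ℝ) / 2) := by
  have h1 : (fun y : Fin m → ℝ => exp (-∑ i, y i ^ 2))
      = fun y => ∏ i, exp (-(y i ^ 2)) := by
    funext y
    rw [← Real.exp_sum, ← Finset.sum_neg_distrib]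
  rw [h1, MeasureTheory.volume_pi, MeasureTheory.integral_fintype_prod_eq_pow (ι := Fin m) (fun t : ℝ => exp (-t ^ 2))]
  have h2 : ∫ t : ℝ, exp (-t ^ 2) = Real.sqrt π := by
    simpa using integral_gaussian 1
  rw [h2, Fintype.card_fin, Real.sqrt_eq_rpow, ← Real.rpow_natCast (π ^ ((1:ℝ)/2)) m,
    ← Real.rpow_mul pi_nonneg]
  ring_nf

section mat
variable {m : ℕ} {A : Matrix (Fin m) (Fin m) ℝ}

lemma aux_sqrt_facts (hA : A.PosDef) :
    ∃ B : Matrix (Fin m) (Fin m) ℝ, B.IsHermitian ∧ B * B = A ∧ |B.det| = Real.sqrt A.det := by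
  open scoped MatrixOrder in
  refine ⟨CFC.sqrt A, (CFC.sqrt_nonneg A).posSemidef.1,
    CFC.sqrt_mul_sqrt_self A hA.posSemidef.nonneg, ?_⟩
  have h : (CFC.sqrt A).det * (CFC.sqrt A).det = A.det := by
    rw [← Matrix.det_mul, CFC.sqrt_mul_sqrt_self A hA.posSemidef.nonneg]
  rw [← h, ← sq, Real.sqrt_sq_eq_abs]

lemma aux_gauss_matrix_integrable (hA : A.PosDef) :
    Integrable (fun x : Fin m → ℝ => exp (-(x ⬝ᵥ A.mulVec x))) := by
  obtain ⟨B, hBH, hBB, hBdet⟩ := aux_sqrt_facts hA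
  have hdetA : 0 < A.det := hA.det_pos
  have hdetB : B.det ≠ 0 := by
    intro h
    rw [h, abs_zero] at hBdet
    exact absurd hBdet.symm (ne_of_gt (Real.sqrt_pos.2 hdetA))
  have hrw : (fun x : Fin m → ℝ => exp (-(x ⬝ᵥ A.mulVec x)))
      = (fun y : Fin m → ℝ => exp (-∑ i, y i ^ 2)) ∘ (Matrix.toLin' B) := by
    funext x
    simp [Function.comp, Matrix.toLin'_apply, aux_quad_eq_sum_sq hBH hBB x]
  rw [hrw]
  have hmap := Real.map_matrix_volume_pi_eq_smul_volume_pi (M := B) hdetB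
  rw [← MeasureTheory.integrable_map_measure
    (aux_gauss_pi_integrable.aestronglyMeasurable.mono_ac (by
      rw [hmap]; exact (Measure.absolutelyContinuous_of_le_smul le_rfl)))
    (Continuous.aemeasurable (LinearMap.continuous_of_finiteDimensional _)), hmap]
  exact aux_gauss_pi_integrable.smul_measure ENNReal.ofReal_ne_top

lemma aux_gauss_matrix_integral (hA : A.PosDef) :
    ∫ x : Fin m → ℝ, exp (-(x ⬝ᵥ A.mulVec x)) = π ^ ((m : ℝ) / 2) * A.det ^ (-(1:ℝ) / 2) := by
  obtain ⟨B, hBH, hBB, hBdet⟩ := aux_sqrt_facts hA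
  have hdetA : 0 < A.det := hA.det_pos
  have hdetB : B.det ≠ 0 := by
    intro h
    rw [h, abs_zero] at hBdet
    exact absurd hBdet.symm (ne_of_gt (Real.sqrt_pos.2 hdetA))
  have hmap := Real.map_matrix_volume_pi_eq_smul_volume_pi (M := B) hdetB
  have hcont : Continuous (fun y : Fin m → ℝ => exp (-∑ i, y i ^ 2)) := by fun_prop
  have hT : AEMeasurable (⇑(Matrix.toLin' B)) (volume : Measure (Fin m → ℝ)) :=
    (LinearMap.continuous_of_finiteDimensional _).aemeasurable
  have hint := MeasureTheory.integral_map (μ := volume) hT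
    (hcont.aestronglyMeasurable (μ := Measure.map (⇑(Matrix.toLin' B)) volume))
  rw [hmap, MeasureTheory.integral_smul_measure, ENNReal.toReal_ofReal (abs_nonneg _),
    smul_eq_mul, aux_gauss_pi_integral] at hint
  have h3 : ∀ x : Fin m → ℝ, exp (-(x ⬝ᵥ A.mulVec x)) = exp (-∑ i, (Matrix.toLin' B) x i ^ 2) := by
    intro x
    rw [aux_quad_eq_sum_sq hBH hBB x]
    simp [Matrix.toLin'_apply]
  simp_rw [h3]
  rw [← hint, abs_inv, hBdet, Real.sqrt_eq_rpow, mul_comm]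
  congr 1
  rw [← Real.rpow_neg_one (A.det ^ ((1:ℝ)/2)), ← Real.rpow_mul hdetA.le]
  norm_num
end mat

/-- If `X ~ N(0, Σ)` with `Σ = φ(-θ)⁻¹`, then the law of
`Y = q(X)/2` is the Wishart law `γ_{q,θ}`. -/
theorem wishart_as_gaussian_image {n m : ℕ} (Ω : Set (Fin n → ℝ))
    (hopen : IsOpen Ω) (hconv : Convex ℝ Ω)
    (hcone : ∀ (c : ℝ), 0 < c → ∀ y ∈ Ω, c • y ∈ Ω) (hne : Ω.Nonempty)
    (hreg : closure Ω ∩ (-closure Ω) = {0})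
    (q : QuadraticMap ℝ (Fin m → ℝ) (Fin n → ℝ))
    (hq : ∀ x, x ≠ 0 → q x ∈ closure Ω \ {0})
    (φ : (Fin n → ℝ) →ₗ[ℝ] Matrix (Fin m) (Fin m) ℝ)
    (hφsymm : ∀ η, (φ η).IsSymm)
    (hφ : ∀ (η : Fin n → ℝ) (x : Fin m → ℝ), x ⬝ᵥ (φ η).mulVec x = q x ⬝ᵥ η)
    (θ : Fin n → ℝ) (hθ : ∀ y ∈ closure Ω \ {0}, 0 < y ⬝ᵥ (-θ))
    (S : Matrix (Fin m) (Fin m) ℝ) (hS : S = (φ (-θ))⁻¹) :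
    Measure.map (fun x => (2 : ℝ)⁻¹ • q x)
        (volume.withDensity fun x : Fin m → ℝ =>
          ENNReal.ofReal ((2 * Real.pi) ^ (-(m : ℝ) / 2) * S.det ^ (-(1 : ℝ) / 2) *
            Real.exp (-(x ⬝ᵥ S⁻¹.mulVec x) / 2)))
      = wishartLaw (Measure.map (⇑q) volume) θ := by
  have hπ : (0:ℝ) < π := pi_pos
  set A : Matrix (Fin m) (Fin m) ℝ := φ (-θ) with hA_def
  have hApos : A.PosDef := by
    refine Matrix.PosDef.of_dotProduct_mulVec_pos ?_ ?_
    · rw [Matrix.IsHermitian, Matrix.conjTranspose_eq_transpose_of_trivial]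
      exact hφsymm (-θ)
    · intro x hx
      have h1 : star x = x := by funext i; simp
      rw [h1, hφ (-θ) x]
      exact hθ _ (hq x hx)
  have hdetA : 0 < A.det := hApos.det_pos
  have hSinv : S⁻¹ = A := by
    rw [hS]
    exact Matrix.nonsing_inv_nonsing_inv _ hdetA.ne'.isUnit
  have hSdet : S.det = A.det⁻¹ := by
    rw [hS, Matrix.det_nonsing_inv, Ring.inverse_eq_inv']
  -- continuity and measurability of `q`
  have hqrep : ∀ (x : Fin m → ℝ) i, q x i = x ⬝ᵥ (φ (Pi.single i 1)).mulVec x := by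
    intro x i
    rw [hφ (Pi.single i 1) x]
    simp
  have hqc : Continuous ⇑q := by
    have h : ⇑q = fun x => fun i => x ⬝ᵥ (φ (Pi.single i 1)).mulVec x := by
      funext x i; exact hqrep x i
    rw [h]
    refine continuous_pi fun i => ?_
    simp only [dotProduct, Matrix.mulVec]
    exact continuous_finset_sum _ fun j _ => (continuous_apply j).mul
      (continuous_finset_sum _ fun k _ => continuous_const.mul (continuous_apply k))
  have hqm : Measurable ⇑q := hqc.measurable
  set T : (Fin m → ℝ) → (Fin n → ℝ) := fun x => (2:ℝ)⁻¹ • q x with hT_def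
  have hTc : Continuous T := hqc.const_smul (2:ℝ)⁻¹
  have hTm : Measurable T := hTc.measurable
  set g : (Fin n → ℝ) → ENNReal := fun y => ENNReal.ofReal (exp (y ⬝ᵥ θ)) with hg_def
  have hgm : Measurable g := by
    apply ENNReal.measurable_ofReal.comp
    apply (Real.continuous_exp.comp ?_).measurable
    simp only [dotProduct]
    exact continuous_finset_sum _ fun j _ => (continuous_apply j).mul continuous_const
  set c₀ : ℝ := (2 * π) ^ (-(m:ℝ)/2) * S.det ^ (-(1:ℝ)/2) with hc0
  have hc0pos : 0 < c₀ := mul_pos (rpow_pos_of_pos (by positivity) _)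
    (rpow_pos_of_pos (by rw [hSdet]; positivity) _)
  have hdens : (fun x : Fin m → ℝ => ENNReal.ofReal (c₀ * exp (-(x ⬝ᵥ S⁻¹.mulVec x)/2)))
      = fun x => ENNReal.ofReal c₀ * g (T x) := by
    funext x
    rw [ENNReal.ofReal_mul hc0pos.le]
    congr 2
    rw [hSinv, hφ (-θ) x]
    simp only [hT_def, smul_dotProduct, dotProduct_neg, smul_eq_mul]
    ring
  set r : ℝ := (Real.sqrt 2)⁻¹ with hr
  have hrpos : 0 < r := inv_pos.2 (Real.sqrt_pos.2 two_pos)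
  have hr2 : r * r = 2⁻¹ := by
    rw [hr, ← mul_inv, Real.mul_self_sqrt (by norm_num)]
  have hTq : T = ⇑q ∘ (fun x : Fin m → ℝ => r • x) := by
    funext x
    simp only [Function.comp, hT_def]
    rw [QuadraticMap.map_smul, hr2]
  have hsm : Measurable (fun x : Fin m → ℝ => r • x) := (continuous_const_smul r).measurable
  have hmapr : Measure.map (fun x : Fin m → ℝ => r • x) (volume)
      = ENNReal.ofReal ((2:ℝ) ^ ((m:ℝ)/2)) • volume := by
    have hf : (fun x : Fin m → ℝ => r • x)
        = ⇑(r • (LinearMap.id : (Fin m → ℝ) →ₗ[ℝ] (Fin m → ℝ))) := by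
      funext x; simp
    have hdet : LinearMap.det (r • (LinearMap.id : (Fin m → ℝ) →ₗ[ℝ] (Fin m → ℝ))) = r ^ m := by
      rw [LinearMap.det_smul, LinearMap.det_id, mul_one]
      congr 1
      simp
    have hne : LinearMap.det (r • (LinearMap.id : (Fin m → ℝ) →ₗ[ℝ] (Fin m → ℝ))) ≠ 0 := by
      rw [hdet]; positivity
    rw [hf, Real.map_linearMap_volume_pi_eq_smul_volume_pi hne, hdet]
    congr 1
    rw [abs_of_pos (by positivity)]
    rw [hr, inv_pow, inv_inv, ← Real.rpow_natCast (Real.sqrt 2) m, Real.sqrt_eq_rpow,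
      ← Real.rpow_mul (by norm_num)]
    congr 1
    ring
  have hLHS : Measure.map T (volume.withDensity fun x =>
        ENNReal.ofReal (c₀ * exp (-(x ⬝ᵥ S⁻¹.mulVec x)/2)))
      = (ENNReal.ofReal c₀ * ENNReal.ofReal ((2:ℝ) ^ ((m:ℝ)/2))) •
          (Measure.map (⇑q) volume).withDensity g := by
    rw [hdens]
    have h1 : (fun x : Fin m → ℝ => ENNReal.ofReal c₀ * g (T x))
        = (ENNReal.ofReal c₀) • fun x => g (T x) := rfl
    rw [h1, withDensity_smul (f := fun x => g (T x)) _ (hgm.comp hTm), Measure.map_smul,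
      aux_map_withDensity volume hTm hgm]
    have h2 : Measure.map T volume = ENNReal.ofReal ((2:ℝ)^((m:ℝ)/2)) • Measure.map (⇑q) volume := by
      rw [hTq, ← Measure.map_map hqm hsm, hmapr, Measure.map_smul]
    rw [h2, withDensity_smul_measure, smul_smul]
  have hZ : (∫⁻ y, ENNReal.ofReal (exp (y ⬝ᵥ θ)) ∂(Measure.map (⇑q) volume))
      = ENNReal.ofReal (π ^ ((m:ℝ)/2) * A.det ^ (-(1:ℝ)/2)) := by
    rw [MeasureTheory.lintegral_map (by exact hgm) hqm]
    have h4 : ∀ x : Fin m → ℝ, (q x) ⬝ᵥ θ = -(x ⬝ᵥ A.mulVec x) := by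
      intro x
      rw [hφ (-θ) x]
      simp [dotProduct_neg]
    simp_rw [h4]
    rw [← MeasureTheory.ofReal_integral_eq_lintegral_ofReal (aux_gauss_matrix_integrable hApos)
      (Filter.Eventually.of_forall fun x => (exp_pos _).le),
      aux_gauss_matrix_integral hApos]
  have hconst : ENNReal.ofReal c₀ * ENNReal.ofReal ((2:ℝ)^((m:ℝ)/2))
      = (ENNReal.ofReal (π ^ ((m:ℝ)/2) * A.det ^ (-(1:ℝ)/2)))⁻¹ := by
    rw [← ENNReal.ofReal_mul hc0pos.le, ← ENNReal.ofReal_inv_of_pos (by positivity)]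
    congr 1
    rw [hc0, hSdet, Real.inv_rpow hdetA.le, Real.mul_rpow (by norm_num) hπ.le, mul_inv]
    have e1 : (2:ℝ)^(-(m:ℝ)/2) * (2:ℝ)^((m:ℝ)/2) = 1 := by
      rw [← Real.rpow_add two_pos, neg_div, neg_add_cancel, Real.rpow_zero]
    have e2 : (π:ℝ)^(-(m:ℝ)/2) = (π^((m:ℝ)/2))⁻¹ := by
      rw [← Real.rpow_neg hπ.le]; ring_nf
    rw [e2]
    linear_combination (π ^ ((m:ℝ)/2))⁻¹ * (A.det ^ (-(1:ℝ)/2))⁻¹ * e1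
  have hgoal : (fun x : Fin m → ℝ =>
        ENNReal.ofReal ((2 * Real.pi) ^ (-(m : ℝ) / 2) * S.det ^ (-(1 : ℝ) / 2) *
          Real.exp (-(x ⬝ᵥ S⁻¹.mulVec x) / 2)))
      = fun x => ENNReal.ofReal (c₀ * exp (-(x ⬝ᵥ S⁻¹.mulVec x)/2)) := rfl
  rw [hgoal, hLHS, wishartLaw, hZ, hconst]
end

section
/- Let V_Z be the subspace of Sym(4,ℝ) consisting of matrices [[y₁₁,0,y₂₁,0],[0,y₁₁,0,y₃₁],[y₂₁,0,y₂₂,0],[0,y₃₁,0,y₃₃]], and P_V = V_Z ∩ Π₄ (the Vinberg dual cone realization). Then P_V = {y ∈ V_Z : y₁₁ > 0, y₁₁y₂₂ − y₂₁² > 0, y₁₁y₃₃ − y₃₁² > 0}, and with respect to the inner product ⟨y,η⟩ = y₁₁η₁₁ + y₂₂η₂₂ + y₃₃η₃₃ + 2y₂₁η₂₁ + 2y₃₁η₃₁ on V_Z, the dual cone is P_V* = {η ∈ V_Z : η₁₁η₂₂η₃₃ − η₃₃η₂₁² − η₂₂η₃₁² > 0, η₂₂ > 0, η₃₃ > 0}.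 -/
open Matrix Real Set

private def Mk (a b c d e : ℝ) : Matrix (Fin 4) (Fin 4) ℝ :=
  !![a, 0, b, 0; 0, a, 0, c; b, 0, d, 0; 0, c, 0, e]

private lemma Mk_def (a b c d e : ℝ) :
    !![a, 0, b, 0; 0, a, 0, c; b, 0, d, 0; 0, c, 0, e] = Mk a b c d e := rfl

private lemma Mk_e00 (a b c d e : ℝ) : Mk a b c d e 0 0 = a := by simp [Mk]
private lemma Mk_e22 (a b c d e : ℝ) : Mk a b c d e 2 2 = d := by simp [Mk]
private lemma Mk_e33 (a b c d e : ℝ) : Mk a b c d e 3 3 = e := by simp [Mk]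
private lemma Mk_e20 (a b c d e : ℝ) : Mk a b c d e 2 0 = b := by simp [Mk]
private lemma Mk_e31 (a b c d e : ℝ) : Mk a b c d e 3 1 = c := by simp [Mk]

private lemma Mk_add_smul (t a b c d e a' b' c' d' e' : ℝ) :
    Mk a b c d e + t • Mk a' b' c' d' e' =
      Mk (a + t * a') (b + t * b') (c + t * c') (d + t * d') (e + t * e') := by
  ext i j
  fin_cases i <;> fin_cases j <;>
    simp [Mk, Matrix.add_apply, Matrix.smul_apply, smul_eq_mul]

private lemma quad_pos {a b c d e : ℝ} (h1 : 0 < a) (h2 : 0 < a * d - b ^ 2)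
    (h3 : 0 < a * e - c ^ 2) (u v w z : ℝ) (h : u ≠ 0 ∨ v ≠ 0 ∨ w ≠ 0 ∨ z ≠ 0) :
    0 < u * (a * u + b * w) + v * (a * v + c * z) + w * (b * u + d * w) +
      z * (c * v + e * z) := by
  have hpos : 0 < (a*u + b*w)^2 + (a*d - b^2)*w^2 + (a*v + c*z)^2 + (a*e - c^2)*z^2 := by
    rcases eq_or_ne w 0 with hw | hw
    · rcases eq_or_ne z 0 with hz | hz
      · subst hw; subst hz
        rcases h with hu | hv | h' | h'
        · have : a * u ≠ 0 := mul_ne_zero h1.ne' hu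
          nlinarith [mul_self_pos.2 this, sq_nonneg (a*v)]
        · have : a * v ≠ 0 := mul_ne_zero h1.ne' hv
          nlinarith [mul_self_pos.2 this, sq_nonneg (a*u)]
        · exact absurd rfl h'
        · exact absurd rfl h'
      · nlinarith [mul_pos h3 (mul_self_pos.2 hz), sq_nonneg (a*u+b*w),
          sq_nonneg (a*v+c*z), mul_nonneg h2.le (sq_nonneg w)]
    · nlinarith [mul_pos h2 (mul_self_pos.2 hw), sq_nonneg (a*u+b*w),
        sq_nonneg (a*v+c*z), mul_nonneg h3.le (sq_nonneg z)]
  nlinarith [hpos, h1]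

private lemma Mk_posDef {a b c d e : ℝ} :
    (Mk a b c d e).PosDef ↔ 0 < a ∧ 0 < a * d - b ^ 2 ∧ 0 < a * e - c ^ 2 := by
  rw [Matrix.posDef_iff_dotProduct_mulVec]
  constructor
  · rintro ⟨-, hq⟩
    have h1 := @hq ![1, 0, 0, 0] (by intro h; simpa using congrFun h 0)
    simp [Mk, dotProduct, mulVec, Fin.sum_univ_four] at h1
    have h2 := @hq ![-b, 0, a, 0] (by
      intro h; have := congrFun h 2; simp at this; linarith)
    simp [Mk, dotProduct, mulVec, Fin.sum_univ_four] at h2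
    have h3 := @hq ![0, -c, 0, a] (by
      intro h; have := congrFun h 3; simp at this; linarith)
    simp [Mk, dotProduct, mulVec, Fin.sum_univ_four] at h3
    refine ⟨h1, by nlinarith, by nlinarith⟩
  · rintro ⟨h1, h2, h3⟩
    constructor
    · ext i j
      fin_cases i <;> fin_cases j <;> simp [Mk]
    · intro x hx
      have hx' : x 0 ≠ 0 ∨ x 1 ≠ 0 ∨ x 2 ≠ 0 ∨ x 3 ≠ 0 := by
        by_contra h
        push_neg at h
        exact hx (funext fun i => by fin_cases i <;> simp [h.1, h.2.1, h.2.2.1, h.2.2.2])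
      have := quad_pos h1 h2 h3 (x 0) (x 1) (x 2) (x 3) hx'
      simp only [Mk, dotProduct, mulVec, Fin.sum_univ_four]
      simp [Fin.sum_univ_four]
      linarith [this]

private def SS : Set (Matrix (Fin 4) (Fin 4) ℝ) :=
  {y | (y 0 1 = 0 ∧ y 0 3 = 0 ∧ y 1 0 = 0 ∧ y 1 1 = y 0 0 ∧ y 1 2 = 0 ∧
        y 2 1 = 0 ∧ y 2 3 = 0 ∧ y 3 0 = 0 ∧ y 3 2 = 0 ∧
        y 0 2 = y 2 0 ∧ y 1 3 = y 3 1) ∧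
      0 ≤ y 0 0 ∧ 0 ≤ y 2 2 ∧ 0 ≤ y 3 3 ∧
      (y 2 0) ^ 2 ≤ y 0 0 * y 2 2 ∧ (y 3 1) ^ 2 ≤ y 0 0 * y 3 3}

private lemma isClosed_SS : IsClosed SS := by
  have hc : ∀ i j : Fin 4, Continuous fun y : Matrix (Fin 4) (Fin 4) ℝ => y i j :=
    fun i j => (continuous_apply j).comp (continuous_apply i)
  unfold SS
  simp only [Set.setOf_and]
  repeat' apply IsClosed.inter
  all_goals first
    | exact isClosed_eq (hc _ _) continuous_const
    | exact isClosed_eq (hc _ _) (hc _ _)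
    | exact isClosed_le continuous_const (hc _ _)
    | exact isClosed_le ((hc _ _).pow 2) ((hc _ _).mul (hc _ _))

set_option maxHeartbeats 1000000 in
/-- The matrix realization of the dual Vinberg cone:
`P_V = V_Z ∩ Π₄` is described by the inequalities
`y₁₁ > 0, y₁₁y₂₂ - y₂₁² > 0, y₁₁y₃₃ - y₃₁² > 0`, and with respect to the
inner product `⟨y,η⟩ = y₁₁η₁₁ + y₂₂η₂₂ + y₃₃η₃₃ + 2y₂₁η₂₁ + 2y₃₁η₃₁` its dual
cone is `{η ∈ V_Z : η₁₁η₂₂η₃₃ - η₃₃η₂₁² - η₂₂η₃₁² > 0, η₂₂ > 0, η₃₃ > 0}`. -/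
theorem vinberg_dual_cone :
    let VZ : Set (Matrix (Fin 4) (Fin 4) ℝ) :=
      {y | ∃ a b c d e : ℝ,
        y = !![a, 0, b, 0;
               0, a, 0, c;
               b, 0, d, 0;
               0, c, 0, e]}
    let PV : Set (Matrix (Fin 4) (Fin 4) ℝ) := {y ∈ VZ | y.PosDef}
    let pair : Matrix (Fin 4) (Fin 4) ℝ → Matrix (Fin 4) (Fin 4) ℝ → ℝ :=
      fun y η => y 0 0 * η 0 0 + y 2 2 * η 2 2 + y 3 3 * η 3 3 +
        2 * y 2 0 * η 2 0 + 2 * y 3 1 * η 3 1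
    (PV = {y ∈ VZ | 0 < y 0 0 ∧ 0 < y 0 0 * y 2 2 - (y 2 0) ^ 2 ∧
        0 < y 0 0 * y 3 3 - (y 3 1) ^ 2}) ∧
    ({η ∈ VZ | ∀ y ∈ closure PV \ {0}, 0 < pair y η}
      = {η ∈ VZ | 0 < η 0 0 * η 2 2 * η 3 3 - η 3 3 * (η 2 0) ^ 2 -
            η 2 2 * (η 3 1) ^ 2 ∧ 0 < η 2 2 ∧ 0 < η 3 3}) := by
  intro VZ PV pair
  have hMkVZ : ∀ a b c d e : ℝ, Mk a b c d e ∈ VZ := fun a b c d e => ⟨a, b, c, d, e, rfl⟩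
  have hMkPV : ∀ a b c d e : ℝ, 0 < a → 0 < a * d - b ^ 2 → 0 < a * e - c ^ 2 →
      Mk a b c d e ∈ PV := fun a b c d e h1 h2 h3 =>
    ⟨hMkVZ a b c d e, Mk_posDef.2 ⟨h1, h2, h3⟩⟩
  have hPVsub : PV ⊆ SS := by
    rintro y ⟨⟨a, b, c, d, e, rfl⟩, hpd⟩
    obtain ⟨h1, h2, h3⟩ := Mk_posDef.1 hpd
    rw [Mk_def]
    refine ⟨by refine ⟨?_, ?_, ?_, ?_, ?_, ?_, ?_, ?_, ?_, ?_, ?_⟩ <;> simp [Mk],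
      ?_, ?_, ?_, ?_, ?_⟩ <;>
      simp only [Mk_e00, Mk_e22, Mk_e33, Mk_e20, Mk_e31] <;> nlinarith [sq_nonneg b, sq_nonneg c]
  have hclos : closure PV ⊆ SS := closure_minimal hPVsub isClosed_SS
  have hray : ∀ y E : Matrix (Fin 4) (Fin 4) ℝ,
      (∀ t : ℝ, 0 < t → y + t • E ∈ PV) → y ∈ closure PV := by
    intro y E h
    have ht : Filter.Tendsto (fun t : ℝ => y + t • E) (nhdsWithin 0 (Ioi 0))
        (nhds (y + (0:ℝ) • E)) :=
      ((continuous_const.add (continuous_id.smul continuous_const)).tendsto 0).mono_left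
        nhdsWithin_le_nhds
    rw [zero_smul, add_zero] at ht
    exact mem_closure_of_tendsto ht (eventually_nhdsWithin_of_forall fun t htt => h t htt)
  constructor
  · ext y
    constructor
    · rintro ⟨⟨a, b, c, d, e, rfl⟩, hpd⟩
      obtain ⟨h1, h2, h3⟩ := Mk_posDef.1 hpd
      refine ⟨⟨a, b, c, d, e, rfl⟩, ?_⟩
      rw [Mk_def]
      simp only [Mk_e00, Mk_e22, Mk_e33, Mk_e20, Mk_e31]
      exact ⟨h1, h2, h3⟩
    · rintro ⟨⟨a, b, c, d, e, rfl⟩, h⟩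
      rw [Mk_def] at h ⊢
      simp only [Mk_e00, Mk_e22, Mk_e33, Mk_e20, Mk_e31] at h
      exact hMkPV a b c d e h.1 h.2.1 h.2.2
  · ext η
    constructor
    · rintro ⟨⟨a, b, c, d, e, rfl⟩, H⟩
      rw [Mk_def] at H ⊢
      have hmemD : Mk 0 0 0 1 0 ∈ closure PV := by
        apply hray _ (Mk 1 0 0 0 1)
        intro t htp
        rw [Mk_add_smul]
        exact hMkPV _ _ _ _ _ (by linarith) (by nlinarith) (by nlinarith)
      have hneD : Mk 0 0 0 1 0 ≠ 0 := fun h => by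
        simpa [Mk] using congrFun (congrFun h 2) 2
      have hmemE : Mk 0 0 0 0 1 ∈ closure PV := by
        apply hray _ (Mk 1 0 0 1 0)
        intro t htp
        rw [Mk_add_smul]
        exact hMkPV _ _ _ _ _ (by linarith) (by nlinarith) (by nlinarith)
      have hneE : Mk 0 0 0 0 1 ≠ 0 := fun h => by
        simpa [Mk] using congrFun (congrFun h 3) 3
      have hd : 0 < d := by
        have h' := H _ ⟨hmemD, hneD⟩
        simp only [pair, Mk_e00, Mk_e22, Mk_e33, Mk_e20, Mk_e31] at h'
        linarith
      have he : 0 < e := by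
        have h' := H _ ⟨hmemE, hneE⟩
        simp only [pair, Mk_e00, Mk_e22, Mk_e33, Mk_e20, Mk_e31] at h'
        linarith
      have hmem2 : Mk 1 (-(b/d)) (-(c/e)) ((b/d)^2) ((c/e)^2) ∈ closure PV := by
        apply hray _ (Mk 0 0 0 1 1)
        intro t htp
        rw [Mk_add_smul]
        exact hMkPV _ _ _ _ _ (by linarith) (by nlinarith) (by nlinarith)
      have hne2 : Mk 1 (-(b/d)) (-(c/e)) ((b/d)^2) ((c/e)^2) ≠ 0 := fun h => by
        simpa [Mk] using congrFun (congrFun h 0) 0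
      have h' := H _ ⟨hmem2, hne2⟩
      simp only [pair, Mk_e00, Mk_e22, Mk_e33, Mk_e20, Mk_e31] at h'
      refine ⟨⟨a, b, c, d, e, rfl⟩, ?_⟩
      simp only [Mk_e00, Mk_e22, Mk_e33, Mk_e20, Mk_e31]
      refine ⟨?_, hd, he⟩
      have expand : (1 * a + (b/d)^2 * d + (c/e)^2 * e + 2 * (-(b/d)) * b +
          2 * (-(c/e)) * c) * (d * e) = a * d * e - e * b ^ 2 - d * c ^ 2 := by
        field_simp
        ring
      calc (0:ℝ) < (1 * a + (b/d)^2 * d + (c/e)^2 * e + 2 * (-(b/d)) * b +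
              2 * (-(c/e)) * c) * (d * e) := mul_pos h' (mul_pos hd he)
        _ = a * d * e - e * b ^ 2 - d * c ^ 2 := expand
    · rintro ⟨⟨a, b, c, d, e, rfl⟩, hcond⟩
      rw [Mk_def] at hcond ⊢
      simp only [Mk_e00, Mk_e22, Mk_e33, Mk_e20, Mk_e31] at hcond
      obtain ⟨hdet, hd, he⟩ := hcond
      refine ⟨hMkVZ a b c d e, ?_⟩
      rintro y ⟨hyc, hy0⟩
      have hy0' : y ≠ 0 := hy0
      obtain ⟨⟨q1, q2, q3, q4, q5, q6, q7, q8, q9, q10, q11⟩, hA, hP, hQ, hb2, hc2⟩ :=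
        hclos hyc
      show 0 < pair y (Mk a b c d e)
      simp only [pair, Mk_e00, Mk_e22, Mk_e33, Mk_e20, Mk_e31]
      rcases hA.eq_or_lt with hA0 | hA0
      · have hB : y 2 0 = 0 := by nlinarith [sq_nonneg (y 2 0)]
        have hC : y 3 1 = 0 := by nlinarith [sq_nonneg (y 3 1)]
        have hPQ : y 2 2 ≠ 0 ∨ y 3 3 ≠ 0 := by
          by_contra hcon
          push_neg at hcon
          apply hy0'
          ext i j
          fin_cases i <;> fin_cases j <;> simp only [Matrix.zero_apply] <;>
            first
              | exact q1 | exact q2 | exact q3 | exact q5 | exact q6 | exact q7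
              | exact q8 | exact q9 | exact hB | exact hC | exact hcon.1
              | exact hcon.2 | exact hA0.symm | exact q4.trans hA0.symm
              | exact q10.trans hB | exact q11.trans hC
        rw [← hA0, hB, hC]
        rcases hPQ with h | h
        · have hp : 0 < y 2 2 := hP.lt_of_ne (Ne.symm h)
          nlinarith [mul_pos hp hd, mul_nonneg hQ he.le]
        · have hq : 0 < y 3 3 := hQ.lt_of_ne (Ne.symm h)
          nlinarith [mul_pos hq he, mul_nonneg hP hd.le]
      · nlinarith [mul_pos (mul_pos hA0 hd) he,
          mul_pos hdet (mul_pos hA0 hA0),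
          mul_nonneg he.le (sq_nonneg (y 0 0 * b + y 2 0 * d)),
          mul_nonneg hd.le (sq_nonneg (y 0 0 * c + y 3 1 * e)),
          mul_nonneg (mul_nonneg (sub_nonneg.2 hb2) (sq_nonneg d)) he.le,
          mul_nonneg (mul_nonneg (sub_nonneg.2 hc2) (sq_nonneg e)) hd.le]
end
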